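/- Let α ∈ ℝ with 0 < α < 1/2, and let u, v, f, g : ℕ → ℝ be defined by the closed formulas of the context. Then: u(0) = v(0) = 0, u(1) = v(1) = 1, f(0) = g(0) = 1; f(k) > 0 and g(k) > 0 for all k ≥ 0, and u(k) > 0, v(k) > 0 for all k ≥ 1; for all k ≥ 0: u(k+1) = u(k) + f(k) and v(k+1) = v(k) + g(k); and for all k ≥ 1: f(k)·v(k) = u(k)·g(k−1) and k − α·u(k)/f(k−1) − α·v(k)/g(k−1) ≠ 0 with g(k) = α·v(k) / (k − α·u(k)/f(k−1) − α·v(k)/g(k−1)). Thus the closed formulas solve, in the symmetric case β = α with initial data u(1) = v(1) = 1, the recurrence obtained from the isomonodromic constraint on the positive axis. -/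

import Mathlib

/-- `Π₁(k) = ∏_{j=1}^{k} (j+2α)/(j−α)`. -/
noncomputable def Pi1 (α : ℝ) (k : ℕ) : ℝ :=
  ∏ j ∈ Finset.range k, (((j : ℝ) + 1) + 2 * α) / (((j : ℝ) + 1) - α)

/-- `Π₂(k) = ∏_{j=1}^{k} (j+α)/(j−2α)`. -/
noncomputable def Pi2 (α : ℝ) (k : ℕ) : ℝ :=
  ∏ j ∈ Finset.range k, (((j : ℝ) + 1) + α) / (((j : ℝ) + 1) - 2 * α)

/-- The axis values of the field `u`: `u(3k) = (2k/(k+2α))·Π₁(k)`,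
`u(3k+1) = ((2k+2α)/(k+2α))·Π₁(k)`, `u(3k+2) = 2·Π₁(k)`. -/
noncomputable def uSeq (α : ℝ) (n : ℕ) : ℝ :=
  if n % 3 = 0 then (2 * ((n / 3 : ℕ) : ℝ) / (((n / 3 : ℕ) : ℝ) + 2 * α)) * Pi1 α (n / 3)
  else if n % 3 = 1 then
    ((2 * ((n / 3 : ℕ) : ℝ) + 2 * α) / (((n / 3 : ℕ) : ℝ) + 2 * α)) * Pi1 α (n / 3)
  else 2 * Pi1 α (n / 3)

/-- The axis values of the field `f`: `f(0) = f(1) = 1` and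
`f(3k−1) = f(3k) = f(3k+1) = (2α/(k+2α))·Π₁(k)` for `k ≥ 1`. -/
noncomputable def fSeq (α : ℝ) (n : ℕ) : ℝ :=
  if n ≤ 1 then 1
  else (2 * α / ((((n + 1) / 3 : ℕ) : ℝ) + 2 * α)) * Pi1 α ((n + 1) / 3)

/-- The axis values of the field `v`: `v(3k) = (k/(k+α))·Π₂(k)`,
`v(3k+1) = Π₂(k)`, and `v(3k−1) = ((k−α)/(k+α))·Π₂(k)` for `k ≥ 1`. -/
noncomputable def vSeq (α : ℝ) (n : ℕ) : ℝ :=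
  if n % 3 = 0 then (((n / 3 : ℕ) : ℝ) / (((n / 3 : ℕ) : ℝ) + α)) * Pi2 α (n / 3)
  else if n % 3 = 1 then Pi2 α (n / 3)
  else (((((n + 1) / 3 : ℕ) : ℝ) - α) / ((((n + 1) / 3 : ℕ) : ℝ) + α))
    * Pi2 α ((n + 1) / 3)

/-- The axis values of the field `g`: `g(0) = 1` and
`g(3k−2) = g(3k−1) = g(3k) = (α/(k+α))·Π₂(k)` for `k ≥ 1`. -/
noncomputable def gSeq (α : ℝ) (n : ℕ) : ℝ :=
  if n = 0 then 1
  else (α / ((((n + 2) / 3 : ℕ) : ℝ) + α)) * Pi2 α ((n + 2) / 3)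
section helpers
variable (α : ℝ)

lemma pi1_pos (hα0 : 0 < α) (hα : α < 1/2) (k : ℕ) : 0 < Pi1 α k := by
  apply Finset.prod_pos; intro j _
  have hj : (0:ℝ) ≤ (j:ℝ) := Nat.cast_nonneg j
  apply div_pos <;> linarith

lemma pi2_pos (hα0 : 0 < α) (hα : α < 1/2) (k : ℕ) : 0 < Pi2 α k := by
  apply Finset.prod_pos; intro j _
  have hj : (0:ℝ) ≤ (j:ℝ) := Nat.cast_nonneg j
  apply div_pos <;> linarith

lemma pi1_succ (k : ℕ) : Pi1 α (k+1) = Pi1 α k * (((k:ℝ)+1+2*α)/((k:ℝ)+1-α)) := by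
  simp only [Pi1, Finset.prod_range_succ]

lemma pi2_succ (k : ℕ) : Pi2 α (k+1) = Pi2 α k * (((k:ℝ)+1+α)/((k:ℝ)+1-2*α)) := by
  simp only [Pi2, Finset.prod_range_succ]

lemma uSeq_a (q : ℕ) : uSeq α (3*q) = (2*(q:ℝ)/((q:ℝ)+2*α)) * Pi1 α q := by
  have h1 : 3*q % 3 = 0 := by omega
  have h2 : 3*q / 3 = q := by omega
  simp [uSeq, h1, h2]

lemma uSeq_b (q : ℕ) : uSeq α (3*q+1) = ((2*(q:ℝ)+2*α)/((q:ℝ)+2*α)) * Pi1 α q := by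
  have h1 : (3*q+1) % 3 = 1 := by omega
  have h2 : (3*q+1) / 3 = q := by omega
  simp [uSeq, h1, h2]

lemma uSeq_c (q : ℕ) : uSeq α (3*q+2) = 2 * Pi1 α q := by
  have h1 : (3*q+2) % 3 = 2 := by omega
  have h2 : (3*q+2) / 3 = q := by omega
  simp [uSeq, h1, h2]

lemma fSeq_a (hα0 : 0 < α) (q : ℕ) :
    fSeq α (3*q) = (2*α/((q:ℝ)+2*α)) * Pi1 α q := by
  rcases Nat.eq_zero_or_pos q with rfl | hq
  · simp [fSeq, Pi1]
    field_simp
  · have h0 : ¬ (3*q ≤ 1) := by omega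
    have h2 : (3*q+1) / 3 = q := by omega
    simp [fSeq, h0, h2]

lemma fSeq_b (hα0 : 0 < α) (q : ℕ) :
    fSeq α (3*q+1) = (2*α/((q:ℝ)+2*α)) * Pi1 α q := by
  rcases Nat.eq_zero_or_pos q with rfl | hq
  · simp [fSeq, Pi1]
    field_simp
  · have h0 : ¬ (3*q+1 ≤ 1) := by omega
    have h2 : (3*q+1+1) / 3 = q := by omega
    simp [fSeq, h0, h2]

lemma fSeq_c (q : ℕ) :
    fSeq α (3*q+2) = (2*α/((q:ℝ)+1+2*α)) * Pi1 α (q+1) := by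
  have h0 : ¬ (3*q+2 ≤ 1) := by omega
  have h2 : (3*q+2+1) / 3 = q+1 := by omega
  simp [fSeq, h0, h2]

lemma vSeq_a (q : ℕ) : vSeq α (3*q) = ((q:ℝ)/((q:ℝ)+α)) * Pi2 α q := by
  have h1 : 3*q % 3 = 0 := by omega
  have h2 : 3*q / 3 = q := by omega
  simp [vSeq, h1, h2]

lemma vSeq_b (q : ℕ) : vSeq α (3*q+1) = Pi2 α q := by
  have h1 : (3*q+1) % 3 = 1 := by omega
  have h2 : (3*q+1) / 3 = q := by omega
  simp [vSeq, h1, h2]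

lemma vSeq_c (q : ℕ) :
    vSeq α (3*q+2) = (((q:ℝ)+1-α)/((q:ℝ)+1+α)) * Pi2 α (q+1) := by
  have h1 : (3*q+2) % 3 = 2 := by omega
  have h2 : (3*q+2+1) / 3 = q+1 := by omega
  simp [vSeq, h1, h2]

lemma gSeq_a (hα0 : 0 < α) (q : ℕ) :
    gSeq α (3*q) = (α/((q:ℝ)+α)) * Pi2 α q := by
  rcases Nat.eq_zero_or_pos q with rfl | hq
  · simp [gSeq, Pi2]
    field_simp
  · have h0 : 3*q ≠ 0 := by omega
    have h2 : (3*q+2) / 3 = q := by omega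
    simp [gSeq, h0, h2]

lemma gSeq_b (q : ℕ) :
    gSeq α (3*q+1) = (α/((q:ℝ)+1+α)) * Pi2 α (q+1) := by
  have h2 : (3*q+1+2) / 3 = q+1 := by omega
  simp [gSeq, h2]

lemma gSeq_c (q : ℕ) :
    gSeq α (3*q+2) = (α/((q:ℝ)+1+α)) * Pi2 α (q+1) := by
  have h2 : (3*q+2+2) / 3 = q+1 := by omega
  simp [gSeq, h2]

end helpers

set_option maxHeartbeats 1600000 in
theorem closed_formulas_solve_recurrence
    (α : ℝ) (hα0 : 0 < α) (hα : α < 1 / 2) :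
    uSeq α 0 = 0 ∧ vSeq α 0 = 0 ∧ uSeq α 1 = 1 ∧ vSeq α 1 = 1 ∧
    fSeq α 0 = 1 ∧ gSeq α 0 = 1 ∧
    (∀ k : ℕ, 0 < fSeq α k ∧ 0 < gSeq α k) ∧
    (∀ k : ℕ, 1 ≤ k → 0 < uSeq α k ∧ 0 < vSeq α k) ∧
    (∀ k : ℕ, uSeq α (k + 1) = uSeq α k + fSeq α k ∧
      vSeq α (k + 1) = vSeq α k + gSeq α k) ∧
    (∀ k : ℕ, 1 ≤ k →
      fSeq α k * vSeq α k = uSeq α k * gSeq α (k - 1) ∧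
      (k : ℝ) - α * uSeq α k / fSeq α (k - 1) - α * vSeq α k / gSeq α (k - 1) ≠ 0 ∧
      gSeq α k = α * vSeq α k /
        ((k : ℝ) - α * uSeq α k / fSeq α (k - 1) - α * vSeq α k / gSeq α (k - 1))) := by
  have hαne : α ≠ 0 := ne_of_gt hα0
  have hp1 := pi1_pos α hα0 hα
  have hp2 := pi2_pos α hα0 hα
  have c0 : ∀ q : ℕ, (0:ℝ) ≤ (q:ℝ) := fun q => Nat.cast_nonneg q
  refine ⟨?_, ?_, ?_, ?_, ?_, ?_, ?_, ?_, ?_, ?_⟩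
  · simp [uSeq]
  · simp [vSeq]
  · simp [uSeq, Pi1]; exact hαne
  · simp [vSeq, Pi2]
  · simp [fSeq]
  · simp [gSeq]
  · -- positivity of f and g
    intro k
    obtain ⟨q, r, hr, rfl⟩ : ∃ q r, r < 3 ∧ k = 3*q + r :=
      ⟨k/3, k%3, Nat.mod_lt _ (by norm_num), by omega⟩
    have hA : (0:ℝ) < (q:ℝ) + 2*α := by linarith [c0 q]
    have hB : (0:ℝ) < (q:ℝ) + α := by linarith [c0 q]
    have hA1 : (0:ℝ) < (q:ℝ) + 1 + 2*α := by linarith [c0 q]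
    have hB1 : (0:ℝ) < (q:ℝ) + 1 + α := by linarith [c0 q]
    interval_cases r
    · simp only [Nat.add_zero]
      rw [fSeq_a α hα0, gSeq_a α hα0]
      exact ⟨mul_pos (div_pos (by linarith) hA) (hp1 q),
        mul_pos (div_pos hα0 hB) (hp2 q)⟩
    · rw [fSeq_b α hα0, gSeq_b]
      exact ⟨mul_pos (div_pos (by linarith) hA) (hp1 q),
        mul_pos (div_pos hα0 hB1) (hp2 (q+1))⟩
    · rw [fSeq_c, gSeq_c]
      exact ⟨mul_pos (div_pos (by linarith) hA1) (hp1 (q+1)),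
        mul_pos (div_pos hα0 hB1) (hp2 (q+1))⟩
  · -- positivity of u and v
    intro k hk
    obtain ⟨q, r, hr, rfl⟩ : ∃ q r, r < 3 ∧ k = 3*q + r :=
      ⟨k/3, k%3, Nat.mod_lt _ (by norm_num), by omega⟩
    have hA : (0:ℝ) < (q:ℝ) + 2*α := by linarith [c0 q]
    have hB : (0:ℝ) < (q:ℝ) + α := by linarith [c0 q]
    have hB1 : (0:ℝ) < (q:ℝ) + 1 + α := by linarith [c0 q]
    have hC1 : (0:ℝ) < (q:ℝ) + 1 - α := by linarith [c0 q]
    interval_cases r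
    · simp only [Nat.add_zero] at hk ⊢
      have hq : 1 ≤ q := by omega
      have hq' : (1:ℝ) ≤ (q:ℝ) := by exact_mod_cast hq
      rw [uSeq_a, vSeq_a]
      exact ⟨mul_pos (div_pos (by linarith) hA) (hp1 q),
        mul_pos (div_pos (by linarith) hB) (hp2 q)⟩
    · rw [uSeq_b, vSeq_b]
      exact ⟨mul_pos (div_pos (by linarith [c0 q]) hA) (hp1 q), hp2 q⟩
    · rw [uSeq_c, vSeq_c]
      exact ⟨mul_pos (by norm_num) (hp1 q),
        mul_pos (div_pos hC1 hB1) (hp2 (q+1))⟩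
  · -- one-step recurrences
    intro k
    obtain ⟨q, r, hr, rfl⟩ : ∃ q r, r < 3 ∧ k = 3*q + r :=
      ⟨k/3, k%3, Nat.mod_lt _ (by norm_num), by omega⟩
    have hA : ((q:ℝ) + 2*α) ≠ 0 := by positivity
    have hB : ((q:ℝ) + α) ≠ 0 := by positivity
    have hA1 : ((q:ℝ) + 1 + 2*α) ≠ 0 := by positivity
    have hB1 : ((q:ℝ) + 1 + α) ≠ 0 := by positivity
    have hC1 : ((q:ℝ) + 1 - α) ≠ 0 := ne_of_gt (by linarith [c0 q])
    have hD1 : ((q:ℝ) + 1 - 2*α) ≠ 0 := ne_of_gt (by linarith [c0 q])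
    interval_cases r
    · simp only [Nat.add_zero]
      rw [uSeq_b, uSeq_a, fSeq_a α hα0, vSeq_b, vSeq_a, gSeq_a α hα0]
      constructor <;> field_simp
    · rw [show 3*q+1+1 = 3*q+2 from rfl, uSeq_c, uSeq_b, fSeq_b α hα0,
        vSeq_c, vSeq_b, gSeq_b, pi2_succ]
      constructor
      · field_simp; ring
      · field_simp
        rw [one_add_div (by rw [mul_comm]; exact hD1 : (q:ℝ) + 1 - α * 2 ≠ 0)]
        ring
    · rw [show 3*q+2+1 = 3*(q+1) by ring, uSeq_a, uSeq_c, fSeq_c,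
        vSeq_a, vSeq_c, gSeq_c, pi1_succ, pi2_succ]
      push_cast
      constructor <;> (field_simp; ring)
  · -- the constraint identities
    intro k hk
    obtain ⟨q, r, hr, rfl⟩ : ∃ q r, r < 3 ∧ k = 3*q + r + 1 :=
      ⟨(k-1)/3, (k-1)%3, Nat.mod_lt _ (by norm_num), by omega⟩
    have hP1 : Pi1 α q ≠ 0 := ne_of_gt (hp1 q)
    have hP2 : Pi2 α q ≠ 0 := ne_of_gt (hp2 q)
    have hP1' : Pi1 α (q+1) ≠ 0 := ne_of_gt (hp1 (q+1))
    have hP2' : Pi2 α (q+1) ≠ 0 := ne_of_gt (hp2 (q+1))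
    have hA : ((q:ℝ) + 2*α) ≠ 0 := by positivity
    have hB : ((q:ℝ) + α) ≠ 0 := by positivity
    have hA1 : ((q:ℝ) + 1 + 2*α) ≠ 0 := by positivity
    have hB1 : ((q:ℝ) + 1 + α) ≠ 0 := by positivity
    have hC1 : ((q:ℝ) + 1 - α) ≠ 0 := ne_of_gt (by linarith [c0 q])
    have hD1 : ((q:ℝ) + 1 - 2*α) ≠ 0 := ne_of_gt (by linarith [c0 q])
    have hE1 : ((q:ℝ) + 1) ≠ 0 := by positivity
    interval_cases r
    · simp only [Nat.add_zero, Nat.add_sub_cancel]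
      have hD : ((3*q+1 : ℕ) : ℝ) - α * uSeq α (3*q+1) / fSeq α (3*q)
          - α * vSeq α (3*q+1) / gSeq α (3*q) = (q:ℝ) + 1 - 2*α := by
        rw [uSeq_b, fSeq_a α hα0, vSeq_b, gSeq_a α hα0]
        push_cast
        field_simp
        ring
      refine ⟨?_, ?_, ?_⟩
      · rw [fSeq_b α hα0, vSeq_b, uSeq_b, gSeq_a α hα0]
        field_simp
      · rw [hD]; exact hD1
      · rw [hD, gSeq_b, vSeq_b, pi2_succ]
        field_simp
    · simp only [Nat.add_sub_cancel]
      rw [show 3*q+1+1 = 3*q+2 from rfl]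
      have hD : ((3*q+2 : ℕ) : ℝ) - α * uSeq α (3*q+2) / fSeq α (3*q+1)
          - α * vSeq α (3*q+2) / gSeq α (3*q+1) = (q:ℝ) + 1 - α := by
        rw [uSeq_c, fSeq_b α hα0, vSeq_c, gSeq_b]
        push_cast
        field_simp
        ring
      refine ⟨?_, ?_, ?_⟩
      · rw [fSeq_c, vSeq_c, uSeq_c, gSeq_b, pi1_succ]
        field_simp
      · rw [hD]; exact hC1
      · rw [hD, gSeq_c, vSeq_c]
        field_simp
    · simp only [Nat.add_sub_cancel]
      rw [show 3*q+2+1 = 3*(q+1) by ring]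
      have hD : ((3*(q+1) : ℕ) : ℝ) - α * uSeq α (3*(q+1)) / fSeq α (3*q+2)
          - α * vSeq α (3*(q+1)) / gSeq α (3*q+2) = (q:ℝ) + 1 := by
        rw [uSeq_a, fSeq_c, vSeq_a, gSeq_c]
        push_cast
        field_simp
        ring
      refine ⟨?_, ?_, ?_⟩
      · rw [fSeq_a α hα0, vSeq_a, uSeq_a, gSeq_c]
        push_cast
        field_simp
      · rw [hD]; exact hE1
      · rw [hD, gSeq_a α hα0, vSeq_a]
        push_cast
        field_simp
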